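/- Let d = p ≡ 7 (mod 8) be prime, x₀ = −2−√(d+1), and √x₀ the purely imaginary square root with positive imaginary part. Then x₁ = (√(−(d−3)(√(d+1)+1)) − x₀)/(√(d+1)·√x₀) is a complex number of modulus 1. -/

import Mathlib

/-- for d = p ≡ 7 (mod 8) prime, with x₀ = −2−√(d+1) and
√x₀ = i√(2+√(d+1)) the purely imaginary square root with positive imaginary part,
the number x₁ = (√(−(d−3)(√(d+1)+1)) − x₀)/(√(d+1)·√x₀) has modulus 1 (here
√(−(d−3)(√(d+1)+1)) = i√((d−3)(√(d+1)+1)), the purely imaginary branch). -/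
theorem x1_unimodular_7mod8 (p : ℕ) (hp : p.Prime) (hp8 : p % 8 = 7) :
    ‖((Complex.I * Real.sqrt (((p : ℝ) - 3) * (Real.sqrt (p + 1) + 1))
        - ((-2 : ℂ) - (Real.sqrt (p + 1) : ℝ))) /
      ((Real.sqrt (p + 1) : ℂ) * (Complex.I * Real.sqrt (2 + Real.sqrt (p + 1)))))‖ = 1 := by
  have hp7 : (7:ℕ) ≤ p := hp8 ▸ Nat.mod_le p 8
  have hp7' : (7:ℝ) ≤ (p:ℝ) := by exact_mod_cast hp7
  set s : ℝ := Real.sqrt ((p:ℝ) + 1) with hs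
  have hs0 : 0 ≤ s := Real.sqrt_nonneg _
  have hs2 : s^2 = (p:ℝ) + 1 := Real.sq_sqrt (by linarith)
  set a : ℝ := Real.sqrt (((p:ℝ) - 3) * (s + 1)) with haa
  have ha0 : 0 ≤ a := Real.sqrt_nonneg _
  have ha2 : a^2 = ((p:ℝ) - 3) * (s + 1) := Real.sq_sqrt (by nlinarith)
  set t : ℝ := Real.sqrt (2 + s) with ht
  have ht0 : 0 ≤ t := Real.sqrt_nonneg _
  have ht2 : t^2 = 2 + s := Real.sq_sqrt (by linarith)
  have hspos : 0 < s := by nlinarith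
  have htpos : 0 < t := by nlinarith
  rw [norm_div, div_eq_one_iff_eq]
  · have h1 : ‖((Complex.I * (a:ℂ)) - ((-2 : ℂ) - (s:ℂ)))‖ ^ 2
        = ‖(((s:ℂ)) * (Complex.I * (t:ℂ)))‖ ^ 2 := by
      rw [Complex.sq_norm, Complex.sq_norm]
      simp [Complex.normSq_apply, Complex.add_re, Complex.add_im, Complex.mul_re, Complex.mul_im]
      nlinarith
    have h2 := norm_nonneg ((Complex.I * (a:ℂ)) - ((-2 : ℂ) - (s:ℂ)))
    have h3 := norm_nonneg (((s:ℂ)) * (Complex.I * (t:ℂ)))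
    nlinarith [h1, h2, h3]
  · simp only [ne_eq, norm_eq_zero]
    intro h
    rw [mul_eq_zero] at h
    rcases h with h | h
    · exact absurd (by exact_mod_cast h) (ne_of_gt hspos)
    · rw [mul_eq_zero] at h
      rcases h with h | h
      · exact Complex.I_ne_zero h
      · exact absurd (by exact_mod_cast h) (ne_of_gt htpos)
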